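/- For u, v > 0, define ψ(u,v) = v/LW₀(v/u) + v·ln(v/LW₀(v/u)) − (u + v). Then for all u, v > 0, the second partial derivative of ψ with respect to v exists and equals ∂²ψ/∂v²(u,v) = LW₀(v/u)/(v·(LW₀(v/u) + 1)); equivalently, writing t = LW₀(v/u) and s = v/t, one has ∂²ψ/∂v² = 1/(s·(t+1)). -/

import Mathlib

/-- The principal branch of the Lambert W function on the nonnegative reals:
for `z ≥ 0`, `LW0 z` is the unique `w ≥ 0` with `w·exp w = z`. -/
noncomputable def LW0 (z : ℝ) : ℝ :=
  Function.invFunOn (fun w => w * Real.exp w) (Set.Ici 0) z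

/-- The phase function `ψ(u,v) = v/LW₀(v/u) + v·ln(v/LW₀(v/u)) − (u + v)`. -/
noncomputable def psi (u v : ℝ) : ℝ :=
  v / LW0 (v / u) + v * Real.log (v / LW0 (v / u)) - (u + v)

open Real Set Filter Topology

lemma fStrict : StrictMonoOn (fun w => w * Real.exp w) (Set.Ici 0) := by
  intro a ha b hb hab
  have h1 : Real.exp a ≤ Real.exp b := Real.exp_le_exp.2 hab.le
  have h2 : (0:ℝ) < Real.exp b := Real.exp_pos b
  simp only [Set.mem_Ici] at ha hb
  show a * Real.exp a < b * Real.exp b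
  nlinarith

lemma exists_W {z : ℝ} (hz : 0 ≤ z) : ∃ w ∈ Set.Ici (0:ℝ), w * Real.exp w = z := by
  have hc : ContinuousOn (fun w => w * Real.exp w) (Set.Icc 0 z) :=
    (continuous_id.mul Real.continuous_exp).continuousOn
  have hmem : z ∈ Set.Icc ((fun w => w * Real.exp w) 0) ((fun w => w * Real.exp w) z) := by
    simp only [Set.mem_Icc]
    constructor
    · simpa using hz
    · nlinarith [Real.one_le_exp hz]
  obtain ⟨w, hw, hfw⟩ := intermediate_value_Icc hz hc hmem
  exact ⟨w, hw.1, hfw⟩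

lemma LW0_spec {z : ℝ} (hz : 0 ≤ z) :
    0 ≤ LW0 z ∧ LW0 z * Real.exp (LW0 z) = z := by
  obtain ⟨w, hw, hfw⟩ := exists_W hz
  have hex : ∃ a ∈ Set.Ici (0:ℝ), (fun w => w * Real.exp w) a = z := ⟨w, hw, hfw⟩
  exact ⟨Function.invFunOn_mem hex, Function.invFunOn_eq hex⟩

lemma LW0_pos {z : ℝ} (hz : 0 < z) : 0 < LW0 z := by
  obtain ⟨h1, h2⟩ := LW0_spec hz.le
  rcases h1.lt_or_eq with h | h
  · exact h
  · exfalso; rw [← h] at h2; simp at h2; linarith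

lemma LW0_continuousAt {z : ℝ} (hz : 0 < z) : ContinuousAt LW0 z := by
  rw [Metric.continuousAt_iff]
  intro ε hε
  obtain ⟨ht0, htz⟩ := LW0_spec hz.le
  set t := LW0 z with htdef
  have ht : 0 < t := LW0_pos hz
  set ε' := min ε t with hε'def
  have hε'0 : 0 < ε' := lt_min hε ht
  have hε't : ε' ≤ t := min_le_right ε t
  have hlm : t - ε' ∈ Set.Ici (0:ℝ) := by simp; linarith
  have htm : t ∈ Set.Ici (0:ℝ) := ht0
  have hpm : t + ε' ∈ Set.Ici (0:ℝ) := by simp; linarith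
  have hlow : (t - ε') * Real.exp (t - ε') < z := by
    have := fStrict hlm htm (by linarith)
    simpa [htz] using this
  have hhigh : z < (t + ε') * Real.exp (t + ε') := by
    have := fStrict htm hpm (by linarith)
    simpa [htz] using this
  refine ⟨min (z - (t - ε') * Real.exp (t - ε')) ((t + ε') * Real.exp (t + ε') - z),
    lt_min (by linarith) (by linarith), ?_⟩
  intro z' hz'
  rw [Real.dist_eq] at hz' ⊢
  have h1 : (t - ε') * Real.exp (t - ε') < z' := by
    have := abs_lt.1 (lt_of_lt_of_le hz' (min_le_left _ _))
    linarith [this.1]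
  have h2 : z' < (t + ε') * Real.exp (t + ε') := by
    have := abs_lt.1 (lt_of_lt_of_le hz' (min_le_right _ _))
    linarith [this.2]
  have hz'0 : 0 < z' :=
    lt_of_le_of_lt (mul_nonneg (by simpa using hlm) (Real.exp_pos _).le) h1
  obtain ⟨ht'0, ht'z⟩ := LW0_spec hz'0.le
  set t' := LW0 z' with ht'def
  have hA : t - ε' < t' := by
    have : (fun w => w * Real.exp w) (t - ε') < (fun w => w * Real.exp w) t' := by
      simpa [ht'z] using h1
    exact (fStrict.lt_iff_lt hlm ht'0).1 this
  have hB : t' < t + ε' := by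
    have : (fun w => w * Real.exp w) t' < (fun w => w * Real.exp w) (t + ε') := by
      simpa [ht'z] using h2
    exact (fStrict.lt_iff_lt ht'0 hpm).1 this
  have : |t' - t| < ε' := abs_lt.2 ⟨by linarith, by linarith⟩
  exact lt_of_lt_of_le this (min_le_left _ _)

lemma LW0_hasDerivAt {z : ℝ} (hz : 0 < z) :
    HasDerivAt LW0 (LW0 z / (z * (LW0 z + 1))) z := by
  obtain ⟨ht0, htz⟩ := LW0_spec hz.le
  set t := LW0 z with htdef
  have ht : 0 < t := LW0_pos hz
  have hf : HasDerivAt (fun w => w * Real.exp w) ((t + 1) * Real.exp t) t := by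
    have := (hasDerivAt_id t).mul (Real.hasDerivAt_exp t)
    refine this.congr_deriv (Eq.symm ?_)
    simp only [id_eq]
    ring
  have hf' : (t + 1) * Real.exp t ≠ 0 := by positivity
  have hev : ∀ᶠ y in 𝓝 z, (fun w => w * Real.exp w) (LW0 y) = y := by
    filter_upwards [Ioi_mem_nhds hz] with y hy
    exact (LW0_spec (le_of_lt hy)).2
  have h := HasDerivAt.of_local_left_inverse (LW0_continuousAt hz) hf hf' hev
  refine h.congr_deriv (Eq.symm ?_)
  rw [eq_comm, inv_eq_iff_eq_inv, eq_comm, inv_div]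
  field_simp
  linear_combination (-1) * htz

lemma LW0_comp_hasDerivAt (u : ℝ) (hu : 0 < u) {v : ℝ} (hv : 0 < v) :
    HasDerivAt (fun v' => LW0 (v' / u)) (LW0 (v / u) / (v * (LW0 (v / u) + 1))) v := by
  have hvu : 0 < v / u := div_pos hv hu
  have ht : 0 < LW0 (v / u) := LW0_pos hvu
  have hW := LW0_hasDerivAt hvu
  have hinner : HasDerivAt (fun v' : ℝ => v' / u) (1 / u) v := by
    simpa using (hasDerivAt_id v).div_const u
  have h := HasDerivAt.comp v hW hinner
  refine h.congr_deriv (Eq.symm ?_)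
  field_simp

lemma psi_hasDerivAt (u : ℝ) (hu : 0 < u) {v : ℝ} (hv : 0 < v) :
    HasDerivAt (fun v' => psi u v') (Real.log u + LW0 (v / u)) v := by
  have hvu : 0 < v / u := div_pos hv hu
  obtain ⟨_, hte⟩ := LW0_spec hvu.le
  set t := LW0 (v / u) with htdef
  have ht : 0 < t := LW0_pos hvu
  set t' := t / (v * (t + 1)) with ht'def
  have ht'' : HasDerivAt (fun v' => LW0 (v' / u)) t' v := LW0_comp_hasDerivAt u hu hv
  have h1 : HasDerivAt (fun v' => v' / LW0 (v' / u)) ((1 * t - v * t') / t ^ 2) v :=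
    (hasDerivAt_id v).div ht'' (ne_of_gt ht)
  have h2 : HasDerivAt (fun v' => Real.log (v' / LW0 (v' / u)))
      (((1 * t - v * t') / t ^ 2) / (v / t)) v :=
    h1.log (by positivity)
  have h3 : HasDerivAt (fun v' => v' * Real.log (v' / LW0 (v' / u)))
      (1 * Real.log (v / t) + v * (((1 * t - v * t') / t ^ 2) / (v / t))) v :=
    (hasDerivAt_id v).mul h2
  have h4 : HasDerivAt (fun v' : ℝ => u + v') 1 v := by
    simpa using (hasDerivAt_id v).const_add u
  have h := (h1.add h3).sub h4
  have hvt : v / t = u * Real.exp t := by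
    rw [div_eq_iff (ne_of_gt ht)]
    have := (div_eq_iff (ne_of_gt hu)).1 hte.symm
    linarith [this]
  have hlog : Real.log (v / t) = Real.log u + t := by
    rw [hvt, Real.log_mul (ne_of_gt hu) (Real.exp_ne_zero _), Real.log_exp]
  refine h.congr_deriv (Eq.symm ?_)
  rw [hlog, ht'def]
  have htp : t + 1 ≠ 0 := by positivity
  field_simp
  ring

/-- The second partial derivative of `ψ` in `v` is `LW₀(v/u)/(v·(LW₀(v/u)+1))`;
equivalently, with `t = LW₀(v/u)` and `s = v/t`, it equals `1/(s·(t+1))`. -/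
theorem psi_second_partial_v (u v : ℝ) (hu : 0 < u) (hv : 0 < v) :
    HasDerivAt (fun v' => deriv (fun v'' => psi u v'') v')
      (LW0 (v / u) / (v * (LW0 (v / u) + 1))) v ∧
    LW0 (v / u) / (v * (LW0 (v / u) + 1)) =
      1 / ((v / LW0 (v / u)) * (LW0 (v / u) + 1)) := by
  have hvu : 0 < v / u := div_pos hv hu
  have ht : 0 < LW0 (v / u) := LW0_pos hvu
  constructor
  · have hEq : (fun v' => deriv (fun v'' => psi u v'') v')
        =ᶠ[𝓝 v] fun v' => Real.log u + LW0 (v' / u) := by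
      filter_upwards [Ioi_mem_nhds hv] with v' hv'
      exact (psi_hasDerivAt u hu hv').deriv
    have h2 : HasDerivAt (fun v' => Real.log u + LW0 (v' / u))
        (LW0 (v / u) / (v * (LW0 (v / u) + 1))) v :=
      (LW0_comp_hasDerivAt u hu hv).const_add (Real.log u)
    exact h2.congr_of_eventuallyEq hEq
  · have htp : LW0 (v / u) + 1 ≠ 0 := by positivity
    field_simp
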